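/- Let G be a group acting on a category B and form the category B^{×G}. Then for any two objects a, b one has a ∼_{B^{×G}} b if and only if there exists g ∈ G with (g•a) ∼_B b. Consequently, since the G-action descends to an action on the set |B| of ∼_B-classes by g•[x] := [g•x], the identity map on objects induces a bijection from the set of G-orbits |B|/G onto |B^{×G}|. -/

import Mathlib

open CategoryTheory Relation

universe w v u

/-- The relation "there exists a morphism" on the objects of a category. -/
def stmt12BRel (B : Type u) [Category.{v} B] : B → B → Prop :=
  fun x y => Nonempty (x ⟶ y)

/-- The relation "there exists a morphism in `B^{×G}`" on the objects: a morphism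
`a → b` in `B^{×G}` is a pair `(g, m)` with `m : φ g a ⟶ b`. -/
def stmt12GRel {B : Type u} [Category.{v} B] {G : Type w} (φ : G → B → B) :
    B → B → Prop :=
  fun a b => ∃ g : G, Nonempty (φ g a ⟶ b)


def stmt12act {B : Type u} [Category.{v} B] {G : Type w}
    (φ : G → B → B) (ψ : ∀ (g : G) {x y : B}, (x ⟶ y) → (φ g x ⟶ φ g y))
    (g : G) : Quot (stmt12BRel B) → Quot (stmt12BRel B) :=
  Quot.lift (fun x => Quot.mk _ (φ g x)) (fun _ _ h => Quot.sound ⟨ψ g h.some⟩)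

def stmt12f0 {B : Type u} [Category.{v} B] {G : Type w} (φ : G → B → B)
    (hBG : ∀ {x y : B}, stmt12BRel B x y → stmt12GRel φ x y) :
    Quot (stmt12BRel B) → Quot (stmt12GRel φ) :=
  Quot.lift (fun x => Quot.mk (stmt12GRel φ) x) (fun _ _ h => Quot.sound (hBG h))

/-- Let `G` act on a category `B` (action `φ` on objects, `ψ` on
morphisms).  Then for the category `B^{×G}` one has `a ∼_{B^{×G}} b` iff there is
`g ∈ G` with `(g • a) ∼_B b`.  Consequently the `G`-action descends to the set `|B|`
of `∼_B`-classes, and the identity on objects induces a bijection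
`|B|/G ≃ |B^{×G}|`. -/
theorem stmt_12 {B : Type u} [Category.{v} B] {G : Type w} [Group G]
    (φ : G → B → B) (ψ : ∀ (g : G) {x y : B}, (x ⟶ y) → (φ g x ⟶ φ g y))
    (hφone : ∀ x : B, φ 1 x = x)
    (hφmul : ∀ (g h : G) (x : B), φ (g * h) x = φ g (φ h x))
    (hψid : ∀ (g : G) (x : B), ψ g (𝟙 x) = 𝟙 (φ g x))
    (hψcomp : ∀ (g : G) {x y z : B} (m : x ⟶ y) (m' : y ⟶ z),
      ψ g (m ≫ m') = ψ g m ≫ ψ g m')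
    (hψone : ∀ {x y : B} (m : x ⟶ y),
      ψ 1 m = eqToHom (hφone x) ≫ m ≫ eqToHom (hφone y).symm)
    (hψmul : ∀ (g h : G) {x y : B} (m : x ⟶ y),
      ψ (g * h) m = eqToHom (hφmul g h x) ≫ ψ g (ψ h m) ≫ eqToHom (hφmul g h y).symm) :
    (∀ a b : B,
      EqvGen (stmt12GRel φ) a b ↔ ∃ g : G, EqvGen (stmt12BRel B) (φ g a) b) ∧
    (∃ act : G → Quot (stmt12BRel B) → Quot (stmt12BRel B),
      (∀ (g : G) (x : B), act g (Quot.mk (stmt12BRel B) x) = Quot.mk (stmt12BRel B) (φ g x)) ∧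
      ∃ e : Quot (fun p q : Quot (stmt12BRel B) => ∃ g : G, act g p = q) ≃
          Quot (stmt12GRel φ),
        ∀ x : B,
          e (Quot.mk (fun p q : Quot (stmt12BRel B) => ∃ g : G, act g p = q)
              (Quot.mk (stmt12BRel B) x)) = Quot.mk (stmt12GRel φ) x) := by

  have hBG : ∀ {x y : B}, stmt12BRel B x y → stmt12GRel φ x y := by
    rintro x y ⟨m⟩
    exact ⟨1, ⟨eqToHom (hφone x) ≫ m⟩⟩
  have hmap : ∀ (g : G) {x y : B}, EqvGen (stmt12BRel B) x y →
      EqvGen (stmt12BRel B) (φ g x) (φ g y) := by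
    intro g x y h
    induction h with
    | rel x y h => exact EqvGen.rel _ _ ⟨ψ g h.some⟩
    | refl x => exact EqvGen.refl _
    | symm x y _ ih => exact EqvGen.symm _ _ ih
    | trans x y z _ _ ih1 ih2 => exact EqvGen.trans _ _ _ ih1 ih2
  constructor
  · intro a b
    constructor
    · intro h
      induction h with
      | rel a b h =>
        obtain ⟨g, ⟨m⟩⟩ := h
        exact ⟨g, EqvGen.rel _ _ ⟨m⟩⟩
      | refl a => exact ⟨1, by rw [hφone]; exact EqvGen.refl a⟩
      | symm a b _ ih =>
        obtain ⟨g, hg⟩ := ih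
        have h1 : φ g⁻¹ (φ g a) = a := by rw [← hφmul, inv_mul_cancel, hφone]
        exact ⟨g⁻¹, EqvGen.symm _ _ (h1 ▸ hmap g⁻¹ hg)⟩
      | trans a b c _ _ ih1 ih2 =>
        obtain ⟨g, hg⟩ := ih1
        obtain ⟨h, hh⟩ := ih2
        refine ⟨h * g, ?_⟩
        rw [hφmul]
        exact EqvGen.trans _ _ _ (hmap h hg) hh
    · rintro ⟨g, hg⟩
      refine EqvGen.trans _ _ _ (EqvGen.rel _ _ ⟨g, ⟨𝟙 _⟩⟩) ?_
      exact EqvGen.mono (fun x y h => hBG h) _ _ hg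
  · refine ⟨stmt12act φ ψ, fun g x => rfl, ?_⟩
    have key : ∀ (p q : Quot (stmt12BRel B)), (∃ g : G, stmt12act φ ψ g p = q) →
        stmt12f0 φ hBG p = stmt12f0 φ hBG q := by
      rintro p q ⟨g, rfl⟩
      induction p using Quot.ind with
      | _ x => exact Quot.sound ⟨g, ⟨𝟙 _⟩⟩
    refine ⟨⟨Quot.lift (stmt12f0 φ hBG) key,
      Quot.lift (fun x => Quot.mk _ (Quot.mk _ x)) (by
        rintro x y ⟨g, ⟨m⟩⟩
        exact (Quot.sound ⟨g, rfl⟩).trans (congrArg _ (Quot.sound ⟨m⟩))),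
      ?_, ?_⟩, fun x => rfl⟩
    · intro p
      induction p using Quot.ind with
      | _ q =>
        induction q using Quot.ind with
        | _ x => rfl
    · intro p
      induction p using Quot.ind with
      | _ x => rfl
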